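/- Bound on d for additive MDS codes: if there is an additive MDS code over F_{q^h} of length n, F_q-dimension r > h, and minimum distance d = n - ⌈r/h⌉ + 1, writing r = (k-1)h + r_0 with k = ⌈r/h⌉ and 1 ≤ r_0 ≤ h, then d ≤ q^h - 1 + (q^h - 1)/(q^{r_0} - 1) and n ≤ k - 2 + q^h + (q^h - 1)/(q^{r_0} - 1). -/

import Mathlib

private lemma additive_MDS_arith (dZ Q R MZ : ℤ) (_hd : 0 ≤ dZ) (hQ1 : 1 ≤ Q) (hR2 : 2 ≤ R)
    (hQR : Q * R ≤ MZ) (hmain : Q * (dZ * (MZ - 1)) ≤ (dZ + 1) * ((Q - 1) * MZ)) :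
    dZ * (R - 1) ≤ R * (Q - 1) := by
  have hMQ : Q < MZ := by nlinarith
  have e1 : dZ * (MZ - Q) ≤ (Q - 1) * MZ := by nlinarith
  have e3 : (dZ * (R - 1)) * (MZ - Q) ≤ (R * (Q - 1)) * (MZ - Q) := by
    nlinarith [mul_le_mul_of_nonneg_left e1 (by linarith : (0 : ℤ) ≤ R - 1),
      mul_nonneg (by linarith : (0 : ℤ) ≤ Q - 1) (by linarith : (0 : ℤ) ≤ MZ - Q * R)]
  exact le_of_mul_le_mul_right e3 (by linarith)

set_option maxHeartbeats 1000000 in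
set_option synthInstance.maxHeartbeats 400000 in
/-- Bound on `d` and `n` for additive MDS codes: if there is an additive MDS code over `F_{q^h}`
of length `n`, `F_q`-dimension `r = (k-1)h + r₀ > h` with `k = ⌈r/h⌉`, `1 ≤ r₀ ≤ h`, and
minimum distance `d = n - k + 1`, then `d ≤ q^h - 1 + (q^h-1)/(q^{r₀}-1)` and
`n ≤ k - 2 + q^h + (q^h-1)/(q^{r₀}-1)`. -/
theorem additive_MDS_d_bound
    (q h n r d k r0 : ℕ) (Fq K : Type) [Field Fq] [Fintype Fq] [Field K] [Fintype K]
    [DecidableEq K] [Algebra Fq K]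
    (hq : Fintype.card Fq = q) (hK : Fintype.card K = q ^ h)
    (C : Submodule Fq (Fin n → K)) (hr : Module.finrank Fq C = r)
    (hd1 : ∀ u ∈ C, u ≠ 0 → d ≤ hammingNorm u)
    (hd2 : ∃ u ∈ C, u ≠ 0 ∧ hammingNorm u = d)
    (hk : (k : ℤ) = ⌈(r : ℚ) / (h : ℚ)⌉)
    (hrk : r = (k - 1) * h + r0) (hr01 : 1 ≤ r0) (hr02 : r0 ≤ h) (hrh : h < r)
    (hMDS : (n : ℤ) = (k : ℤ) + (d : ℤ) - 1) :
    (d : ℚ) ≤ (q : ℚ) ^ h - 1 + ((q : ℚ) ^ h - 1) / ((q : ℚ) ^ r0 - 1) ∧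
    (n : ℚ) ≤ (k : ℚ) - 2 + (q : ℚ) ^ h + ((q : ℚ) ^ h - 1) / ((q : ℚ) ^ r0 - 1) := by
  classical
  have hq2 : 2 ≤ q := hq ▸ Fintype.one_lt_card
  have hh1 : 1 ≤ h := le_trans hr01 hr02
  have hk2 : 2 ≤ k := by
    rcases Nat.lt_or_ge k 2 with hc | hc
    · exfalso
      have : k - 1 = 0 := by omega
      rw [this, zero_mul, zero_add] at hrk
      omega
    · exact hc
  obtain ⟨u, huC, hune, hud⟩ := hd2
  have hd01 : 1 ≤ d := hud ▸ hammingNorm_pos_iff.mpr hune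
  have hnk : n + 1 = k + d := by
    have : (n : ℤ) + 1 = (k : ℤ) + d := by linarith
    exact_mod_cast this
  have hkn : k - 2 < n := by omega
  have hfinK : Module.finrank Fq K = h := by
    have hc := Module.card_eq_pow_finrank (K := Fq) (V := K)
    rw [hK, hq] at hc
    exact (Nat.pow_right_injective hq2 hc.symm)
  -- the shortening map
  have hle : k - 2 ≤ n := le_of_lt hkn
  set f : C →ₗ[Fq] (Fin (k - 2) → K) :=
    { toFun := fun c j => (c : Fin n → K) (Fin.castLE hle j)
      map_add' := fun a b => rfl
      map_smul' := fun m a => rfl } with hf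
  set G := LinearMap.ker f with hG
  haveI : Fintype C := Fintype.ofFinite C
  haveI : Fintype G := Fintype.ofFinite G
  have hrange : Module.finrank Fq (LinearMap.range f) ≤ (k - 2) * h := by
    refine le_trans (Submodule.finrank_le _) ?_
    simp [Module.finrank_pi_fintype, hfinK]
  have hsum := LinearMap.finrank_range_add_finrank_ker f
  rw [hr] at hsum
  have hrk' : r = (k - 2) * h + (h + r0) := by
    have h1 : k - 1 = (k - 2) + 1 := by omega
    rw [h1, add_mul, one_mul] at hrk
    omega
  have hGrk : h + r0 ≤ Module.finrank Fq G := by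
    rw [hrk'] at hsum; rw [hG]; omega
  -- cardinalities
  set w : G → (Fin n → K) := fun v => ((v : C) : Fin n → K) with hw
  set M := Fintype.card G with hM
  have hMpow : M = q ^ Module.finrank Fq G := by
    rw [hM, ← hq]; exact Module.card_eq_pow_finrank (K := Fq) (V := G)
  have hMlb : q ^ (h + r0) ≤ M := by
    rw [hMpow]; exact Nat.pow_le_pow_right (by omega) hGrk
  set ev : Fin n → (G →ₗ[Fq] K) := fun i =>
    (LinearMap.proj i).comp (C.subtype.comp G.subtype) with hev
  set cnt : Fin n → ℕ := fun i => (Finset.univ.filter (fun v : G => w v i ≠ 0)).card with hcnt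
  have hzero : ∀ i : Fin n, i.val < k - 2 → cnt i = 0 := by
    intro i hi
    rw [hcnt]
    simp only
    rw [Finset.card_eq_zero, Finset.filter_eq_empty_iff]
    intro v _
    simp only [not_not]
    have hv : f v.val = 0 := v.property
    exact congrFun hv ⟨i.val, hi⟩
  have hqh1 : 1 ≤ q ^ h := Nat.one_le_pow _ _ (by omega)
  have hcol : ∀ i : Fin n, q ^ h * cnt i ≤ (q ^ h - 1) * M := by
    intro i
    set Z : Finset G := Finset.univ.filter (fun v : G => w v i = 0) with hZdef
    have hfib : ∀ c : K, (Finset.univ.filter (fun v : G => w v i = c)).card ≤ Z.card := by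
      intro c
      rcases Finset.eq_empty_or_nonempty
          (Finset.univ.filter (fun v : G => w v i = c)) with he | ⟨v0, hv0⟩
      · rw [he]; simp
      · have hv0c : w v0 i = c := (Finset.mem_filter.mp hv0).2
        refine Finset.card_le_card_of_injOn (fun v => v - v0) ?_ ?_
        · intro v hv
          have hvc : w v i = c := (Finset.mem_filter.mp hv).2
          rw [hZdef]
          refine Finset.mem_filter.mpr ⟨Finset.mem_univ _, ?_⟩
          have hsub : w (v - v0) i = w v i - w v0 i := by simp [hw]
          rw [hsub, hvc, hv0c, sub_self]
        · intro a _ b _ hab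
          exact sub_left_injective hab
    have hcardsum : M = ∑ c : K, (Finset.univ.filter (fun v : G => w v i = c)).card := by
      rw [hM, ← Finset.card_univ]
      exact Finset.card_eq_sum_card_fiberwise (fun v _ => Finset.mem_univ (w v i))
    have hkey : M ≤ q ^ h * Z.card :=
      calc M = ∑ c : K, (Finset.univ.filter (fun v : G => w v i = c)).card := hcardsum
        _ ≤ ∑ _c : K, Z.card := Finset.sum_le_sum (fun c _ => hfib c)
        _ = q ^ h * Z.card := by rw [Finset.sum_const, Finset.card_univ, hK, smul_eq_mul]
    have hsplit := Finset.card_filter_add_card_filter_not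
      (s := (Finset.univ : Finset G)) (p := fun v : G => w v i = 0)
    have hM_eq : Z.card + cnt i = M := by
      rw [hZdef, hcnt, hM, ← Finset.card_univ]
      exact hsplit
    have hdist : q ^ h * cnt i + q ^ h * Z.card = q ^ h * M := by
      rw [← Nat.mul_add, add_comm (cnt i) _, hM_eq]
    have hMM : M ≤ q ^ h * M := Nat.le_mul_of_pos_left M (by positivity)
    have hexp : (q ^ h - 1) * M + M = q ^ h * M := by
      rw [Nat.sub_mul, one_mul]; omega
    omega
  -- total count
  have hSsum : ∑ v : G, hammingNorm (w v) = ∑ i : Fin n, cnt i := by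
    simp_rw [hcnt, hammingNorm, Finset.card_filter]
    exact Finset.sum_comm
  -- lower bound
  have hlow : d * (M - 1) ≤ ∑ v : G, hammingNorm (w v) := by
    have hstep : ∀ v ∈ Finset.univ.erase (0 : G), d ≤ hammingNorm (w v) := by
      intro v hv
      have hv0 : v ≠ 0 := Finset.ne_of_mem_erase hv
      refine hd1 (w v) (v.val.property) ?_
      intro h0
      exact hv0 (ZeroMemClass.coe_eq_zero.mp (ZeroMemClass.coe_eq_zero.mp h0))
    calc d * (M - 1) = ∑ _v ∈ Finset.univ.erase (0 : G), d := by
          rw [Finset.sum_const, Finset.card_erase_of_mem (Finset.mem_univ 0),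
            Finset.card_univ, smul_eq_mul, mul_comm, hM]
      _ ≤ ∑ v ∈ Finset.univ.erase (0 : G), hammingNorm (w v) := Finset.sum_le_sum hstep
      _ ≤ ∑ v : G, hammingNorm (w v) :=
          Finset.sum_le_sum_of_subset (Finset.erase_subset _ _)
  -- upper bound
  have hIci : (Finset.univ.filter (fun i : Fin n => ¬ i.val < k - 2))
      = Finset.Ici (⟨k - 2, hkn⟩ : Fin n) := by
    ext i
    simp [Fin.le_def, Nat.not_lt]
  have hcard2 : (Finset.univ.filter (fun i : Fin n => ¬ i.val < k - 2)).card = d + 1 := by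
    rw [hIci, Fin.card_Ici]
    show n - (k - 2) = d + 1
    omega
  have hup : q ^ h * (∑ i : Fin n, cnt i) ≤ (d + 1) * ((q ^ h - 1) * M) := by
    rw [Finset.mul_sum]
    calc ∑ i : Fin n, q ^ h * cnt i
        = ∑ i ∈ Finset.univ.filter (fun i : Fin n => ¬ i.val < k - 2), q ^ h * cnt i := by
          refine (Finset.sum_subset (Finset.filter_subset _ _) ?_).symm
          intro i _ hi
          have : i.val < k - 2 := by simp only [Finset.mem_filter, Finset.mem_univ,
            true_and, not_not] at hi; exact hi
          rw [hzero i this, mul_zero]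
      _ ≤ ∑ _i ∈ Finset.univ.filter (fun i : Fin n => ¬ i.val < k - 2), (q ^ h - 1) * M :=
          Finset.sum_le_sum (fun i _ => hcol i)
      _ = (d + 1) * ((q ^ h - 1) * M) := by rw [Finset.sum_const, hcard2, smul_eq_mul]
  have hmain : q ^ h * (d * (M - 1)) ≤ (d + 1) * ((q ^ h - 1) * M) := by
    refine le_trans (Nat.mul_le_mul_left _ hlow) ?_
    rw [hSsum]; exact hup
  -- final arithmetic
  have hM1 : 1 ≤ M := le_trans (Nat.one_le_pow _ _ (by omega)) hMlb
  zify [hqh1, hM1] at hmain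
  set Q : ℤ := (q : ℤ) ^ h with hQ
  set R : ℤ := (q : ℤ) ^ r0 with hR
  have hq2Z : (2 : ℤ) ≤ (q : ℤ) := by exact_mod_cast hq2
  have hQ1 : (1 : ℤ) ≤ Q := one_le_pow₀ (by linarith)
  have hR2 : (2 : ℤ) ≤ R := by
    calc (2 : ℤ) ≤ (q : ℤ) := hq2Z
      _ = (q : ℤ) ^ 1 := (pow_one _).symm
      _ ≤ R := pow_le_pow_right₀ (by linarith) hr01
  have hQR : Q * R ≤ (M : ℤ) := by
    rw [hQ, hR, ← pow_add]
    exact_mod_cast hMlb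
  have keyZ : (d : ℤ) * (R - 1) ≤ R * (Q - 1) :=
    additive_MDS_arith (d : ℤ) Q R (M : ℤ) (by positivity) hQ1 hR2 hQR hmain
  have keyQ : (d : ℚ) * ((q : ℚ) ^ r0 - 1) ≤ (q : ℚ) ^ r0 * ((q : ℚ) ^ h - 1) := by
    rw [hQ, hR] at keyZ
    have hcst := (@Int.cast_le ℚ _ _ _).mpr keyZ
    push_cast at hcst
    linarith
  have hRQpos : (0 : ℚ) < (q : ℚ) ^ r0 - 1 := by
    have h1 : (1 : ℚ) < (q : ℚ) := by exact_mod_cast hq2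
    have := one_lt_pow₀ h1 (by omega : r0 ≠ 0)
    linarith
  have goal1 : (d : ℚ) ≤ (q : ℚ) ^ h - 1 + ((q : ℚ) ^ h - 1) / ((q : ℚ) ^ r0 - 1) := by
    have h2 : (q : ℚ) ^ h - 1 + ((q : ℚ) ^ h - 1) / ((q : ℚ) ^ r0 - 1)
        = ((q : ℚ) ^ r0 * ((q : ℚ) ^ h - 1)) / ((q : ℚ) ^ r0 - 1) := by
      field_simp
      ring
    rw [h2, le_div_iff₀ hRQpos]
    linarith
  refine ⟨goal1, ?_⟩
  have hnQ : (n : ℚ) = (k : ℚ) + (d : ℚ) - 1 := by exact_mod_cast hMDS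
  linarith
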